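/- Fix A > 0 and for B > 0 let λ*₀(B) := (3A/2)·[1 − 3(√B − tanh(√B))/(B·tanh(√B))]^{−1} and h₀*(B;x) := (λ*₀(B)/2)(1 − x²) − (λ*₀(B)/(√B·sinh(√B)))·[cosh(√B) − cosh(√B·x)]. Then for every x ∈ [−1,1], h₀*(B;x) → (3A/4)(1 − x²) as B → ∞. -/

import Mathlib

open Filter Real

/-- The squared maximal sloshing frequency `λ*₀(B)` for `α = 0` with surface tension. -/
noncomputable def lamStar0 (A B : ℝ) : ℝ :=
  (3 * A / 2) * (1 - 3 * (Real.sqrt B - Real.tanh (Real.sqrt B)) /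
    (B * Real.tanh (Real.sqrt B)))⁻¹

/-- The optimal shallow canal cross-section `h₀*(B; x)` for `α = 0` with surface tension. -/
noncomputable def hStar0 (A B x : ℝ) : ℝ :=
  lamStar0 A B / 2 * (1 - x ^ 2) -
    lamStar0 A B / (Real.sqrt B * Real.sinh (Real.sqrt B)) *
      (Real.cosh (Real.sqrt B) - Real.cosh (Real.sqrt B * x))

lemma tendsto_sqrt_atTop' : Tendsto Real.sqrt atTop atTop :=
  (tendsto_rpow_atTop (by norm_num : (0:ℝ) < 1/2)).congr
    (fun x => (Real.sqrt_eq_rpow x).symm)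

lemma tanh_eq_aux (t : ℝ) : Real.tanh t = 1 - 2 / (Real.exp (2 * t) + 1) := by
  have h1 : Real.exp (2 * t) = Real.exp t * Real.exp t := by
    rw [two_mul, Real.exp_add]
  have h2 : Real.exp t * Real.exp t + 1 > 0 := by positivity
  have h3 : Real.cosh t ≠ 0 := (Real.cosh_pos t).ne'
  rw [Real.tanh_eq_sinh_div_cosh, Real.sinh_eq, Real.cosh_eq, Real.exp_neg, h1]
  have he := Real.exp_ne_zero t
  field_simp
  ring

lemma tendsto_tanh_one : Tendsto Real.tanh atTop (nhds 1) := by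
  have h : Tendsto (fun t : ℝ => 1 - 2 / (Real.exp (2 * t) + 1)) atTop (nhds (1 - 0)) := by
    apply tendsto_const_nhds.sub
    apply Tendsto.div_atTop tendsto_const_nhds
    exact tendsto_atTop_add_const_right _ 1
      (Real.tendsto_exp_atTop.comp (tendsto_id.const_mul_atTop two_pos))
  simpa using h.congr (fun t => (tanh_eq_aux t).symm)

lemma tendsto_coth_one : Tendsto (fun t => Real.cosh t / Real.sinh t) atTop (nhds 1) := by
  have h := (tendsto_tanh_one.inv₀ one_ne_zero)
  simp only [inv_one] at h
  apply h.congr'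
  filter_upwards [eventually_gt_atTop (0:ℝ)] with t ht
  rw [Real.tanh_eq_sinh_div_cosh, inv_div]

lemma tendsto_lamStar0 (A : ℝ) :
    Tendsto (fun B => lamStar0 A B) atTop (nhds (3 * A / 2)) := by
  have hsq := tendsto_sqrt_atTop'
  have key : Tendsto (fun B => 3 * (Real.sqrt B - Real.tanh (Real.sqrt B)) /
      (B * Real.tanh (Real.sqrt B))) atTop (nhds 0) := by
    have h1 : Tendsto (fun B : ℝ => 3 / (Real.sqrt B * Real.tanh (Real.sqrt B)) - 3 / B)
        atTop (nhds (0 - 0)) := by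
      apply Tendsto.sub
      · apply Tendsto.div_atTop tendsto_const_nhds
        exact Filter.Tendsto.atTop_mul_pos one_pos hsq (tendsto_tanh_one.comp hsq)
      · exact Tendsto.div_atTop tendsto_const_nhds tendsto_id
    rw [show (0:ℝ) = 0 - 0 by ring]
    apply h1.congr'
    filter_upwards [eventually_gt_atTop (0:ℝ)] with B hB
    have hsB : 0 < Real.sqrt B := Real.sqrt_pos.mpr hB
    have htB : 0 < Real.tanh (Real.sqrt B) := by
      rw [Real.tanh_eq_sinh_div_cosh]
      exact div_pos (Real.sinh_pos_iff.mpr hsB) (Real.cosh_pos _)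
    have hBsq : Real.sqrt B * Real.sqrt B = B := Real.mul_self_sqrt hB.le
    rw [← hBsq]
    field_simp
    ring_nf
    rw [Real.sq_sqrt hB.le, mul_inv_cancel₀ htB.ne', Real.sq_sqrt hB.le]; ring
  have : Tendsto (fun B => (3 * A / 2) * (1 - 3 * (Real.sqrt B - Real.tanh (Real.sqrt B)) /
      (B * Real.tanh (Real.sqrt B)))⁻¹) atTop (nhds ((3 * A / 2) * (1 - 0)⁻¹)) := by
    apply tendsto_const_nhds.mul
    exact (tendsto_const_nhds.sub key).inv₀ (by norm_num)
  simpa [lamStar0] using this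

theorem hStar0_zero_surface_tension_limit (A : ℝ) (hA : 0 < A)
    (x : ℝ) (hx : x ∈ Set.Icc (-1 : ℝ) 1) :
    Filter.Tendsto (fun B => hStar0 A B x) Filter.atTop
      (nhds (3 * A / 4 * (1 - x ^ 2))) := by
  obtain ⟨hx1, hx2⟩ := hx
  have hsq := tendsto_sqrt_atTop'
  have hlam := tendsto_lamStar0 A
  -- second factor tends to 0
  have hratio : Tendsto (fun B => (Real.cosh (Real.sqrt B) - Real.cosh (Real.sqrt B * x)) /
      (Real.sqrt B * Real.sinh (Real.sqrt B))) atTop (nhds 0) := by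
    have hub : Tendsto (fun B => (1 / Real.sqrt B) * (Real.cosh (Real.sqrt B) / Real.sinh (Real.sqrt B)))
        atTop (nhds 0) := by
      simpa using (Tendsto.div_atTop (tendsto_const_nhds : Tendsto (fun _ : ℝ => (1:ℝ)) atTop _) hsq).mul
        (tendsto_coth_one.comp hsq)
    apply tendsto_of_tendsto_of_tendsto_of_le_of_le' tendsto_const_nhds hub
    · filter_upwards [eventually_gt_atTop (0:ℝ)] with B hB
      have hsB : 0 < Real.sqrt B := Real.sqrt_pos.mpr hB
      have hshB : 0 < Real.sinh (Real.sqrt B) := Real.sinh_pos_iff.mpr hsB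
      apply div_nonneg _ (by positivity)
      have : Real.cosh (Real.sqrt B * x) ≤ Real.cosh (Real.sqrt B) := by
        rw [Real.cosh_le_cosh]
        rw [abs_mul, abs_of_pos hsB]
        calc Real.sqrt B * |x| ≤ Real.sqrt B * 1 := by
              apply mul_le_mul_of_nonneg_left _ hsB.le
              exact abs_le.mpr ⟨hx1, hx2⟩
          _ = Real.sqrt B := mul_one _
      linarith
    · filter_upwards [eventually_gt_atTop (0:ℝ)] with B hB
      have hsB : 0 < Real.sqrt B := Real.sqrt_pos.mpr hB
      have hshB : 0 < Real.sinh (Real.sqrt B) := Real.sinh_pos_iff.mpr hsB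
      rw [div_le_iff₀ (by positivity)]
      have hc1 : (1:ℝ) ≤ Real.cosh (Real.sqrt B * x) := Real.one_le_cosh _
      have expand : (1 / Real.sqrt B) * (Real.cosh (Real.sqrt B) / Real.sinh (Real.sqrt B)) *
          (Real.sqrt B * Real.sinh (Real.sqrt B)) = Real.cosh (Real.sqrt B) := by
        field_simp
      rw [expand]
      linarith
  have hmain : Tendsto (fun B => lamStar0 A B / 2 * (1 - x ^ 2) -
      lamStar0 A B * ((Real.cosh (Real.sqrt B) - Real.cosh (Real.sqrt B * x)) /
        (Real.sqrt B * Real.sinh (Real.sqrt B)))) atTop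
      (nhds ((3 * A / 2) / 2 * (1 - x ^ 2) - (3 * A / 2) * 0)) := by
    exact ((hlam.div_const 2).mul tendsto_const_nhds).sub (hlam.mul hratio)
  have : (3 * A / 2) / 2 * (1 - x ^ 2) - (3 * A / 2) * 0 = 3 * A / 4 * (1 - x ^ 2) := by ring
  rw [this] at hmain
  apply hmain.congr
  intro B
  simp only [hStar0]
  ring
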